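/- Let p be a prime with p ≡ 7 (mod 8). Then there are no positive integers x, y, z with z even and x² + y² + z⁶ = p². -/

import Mathlib

/-- A natural number congruent to 3 mod 4 is not a sum of two squares. -/
lemma aux_not_sq_add_sq (m : ℕ) (hm : m % 4 = 3) : ¬ ∃ x y : ℕ, m = x ^ 2 + y ^ 2 := by
  rintro ⟨x, y, rfl⟩
  have h1 : ((x ^ 2 + y ^ 2 : ℕ) : ZMod 4) = 3 := by
    rw [← ZMod.natCast_mod, hm]; rfl
  push_cast at h1
  have hall : ∀ a b : ZMod 4, a ^ 2 + b ^ 2 ≠ 3 := by decide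
  exact hall _ _ h1

theorem no_rep_k6 (p : ℕ) (hp : p.Prime) (hp7 : p % 8 = 7) :
    ¬ ∃ x y z : ℕ, 0 < x ∧ 0 < y ∧ 0 < z ∧ Even z ∧ x ^ 2 + y ^ 2 + z ^ 6 = p ^ 2 := by
  rintro ⟨x, y, z, hx, hy, hz, ⟨w, rfl⟩, h⟩
  have hz3 : (w + w) ^ 3 < p := by
    have h6 : ((w + w) ^ 3) ^ 2 < p ^ 2 := by nlinarith
    exact lt_of_pow_lt_pow_left₀ 2 (Nat.zero_le p) h6
  set a := p - (w + w) ^ 3 with ha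
  set b := p + (w + w) ^ 3 with hb
  have hpa : p = a + (w + w) ^ 3 := by omega
  have hn : x ^ 2 + y ^ 2 = a * b := by
    have hb' : b = a + 2 * (w + w) ^ 3 := by omega
    have ht : (w + w) ^ 6 = ((w + w) ^ 3) ^ 2 := by ring
    rw [hb']
    nlinarith [h, hpa, ht]
  have h8 : (w + w) ^ 3 % 8 = 0 := by
    have : (w + w) ^ 3 = 8 * w ^ 3 := by ring
    omega
  have ha4 : a % 4 = 3 := by omega
  have hb4 : b % 4 = 3 := by omega
  have ha0 : 0 < a := by omega
  have hb0 : 0 < b := by omega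
  have hap : a < p := by
    have : 0 < (w + w) ^ 3 := by positivity
    omega
  -- a is ≡ 3 mod 4, so not a sum of two squares; get a prime q ≡ 3 mod 4 with odd valuation in a
  have hne : ¬ ∀ q : ℕ, q.Prime → q % 4 = 3 → Even (padicValNat q a) := by
    intro H
    exact aux_not_sq_add_sq a ha4
      (Nat.eq_sq_add_sq_iff.mpr fun q hq h3 => H q (Nat.prime_of_mem_primeFactors hq) h3)
  push_neg at hne
  obtain ⟨q, hq, hq3, hodd⟩ := hne
  rw [Nat.not_even_iff_odd] at hodd
  haveI : Fact q.Prime := ⟨hq⟩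
  have hval_pos : padicValNat q a ≠ 0 := by
    intro h0; rw [h0] at hodd; exact (Nat.not_odd_iff_even.2 Even.zero) hodd
  have hqa : q ∣ a := dvd_trans (dvd_pow_self q hval_pos) pow_padicValNat_dvd
  -- q does not divide b
  have hqb : ¬ q ∣ b := by
    intro hdvd
    have h2p : q ∣ 2 * p := by
      have : a + b = 2 * p := by omega
      exact this ▸ Nat.dvd_add hqa hdvd
    have hcop : Nat.Coprime q 2 :=
      Nat.coprime_comm.mp (Nat.prime_two.coprime_iff_not_dvd.2 (fun h2 => by omega))
    have hqp : q ∣ p := Nat.Coprime.dvd_of_dvd_mul_left hcop h2p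
    have := (Nat.prime_dvd_prime_iff_eq hq hp).1 hqp
    subst this
    have := Nat.le_of_dvd ha0 hqa
    omega
  have hvb : padicValNat q b = 0 := padicValNat.eq_zero_of_not_dvd hqb
  have heven : Even (padicValNat q (x ^ 2 + y ^ 2)) :=
    Nat.eq_sq_add_sq_iff.mp ⟨x, y, rfl⟩ q
      (Nat.mem_primeFactors.2 ⟨hq, by rw [hn]; exact Dvd.dvd.mul_right hqa b, by positivity⟩) hq3
  rw [hn, padicValNat.mul (by omega) (by omega), hvb, add_zero] at heven
  exact (Nat.not_even_iff_odd.2 hodd) heven
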